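/- In the coordinates q₁ = (m₁₁+m₂₂)/√2, q₂ = (m₁₁-m₂₂)/√2, q₃ = (m₁₂+m₂₁)/√2, q₄ = (m₁₂-m₂₁)/√2, the function g(M) = (1/2)(|M|² + √(|M|⁴ - 4(det M)²)) equals (1/2)(√(q₁²+q₄²) + √(q₂²+q₃²))². -/

import Mathlib

noncomputable def frobSq (M : Matrix (Fin 2) (Fin 2) ℝ) : ℝ := ∑ i, ∑ j, (M i j)^2

noncomputable def gFun (M : Matrix (Fin 2) (Fin 2) ℝ) : ℝ :=
  (1/2) * (frobSq M + Real.sqrt ((frobSq M)^2 - 4 * (M.det)^2))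

theorem gFun_coords (M : Matrix (Fin 2) (Fin 2) ℝ)
    (q₁ q₂ q₃ q₄ : ℝ)
    (hq₁ : q₁ = (M 0 0 + M 1 1) / Real.sqrt 2)
    (hq₂ : q₂ = (M 0 0 - M 1 1) / Real.sqrt 2)
    (hq₃ : q₃ = (M 0 1 + M 1 0) / Real.sqrt 2)
    (hq₄ : q₄ = (M 0 1 - M 1 0) / Real.sqrt 2) :
    gFun M = (1/2) * (Real.sqrt (q₁^2 + q₄^2) + Real.sqrt (q₂^2 + q₃^2))^2 := by
  have s2 : (Real.sqrt 2)^2 = 2 := Real.sq_sqrt (by norm_num)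
  have s2ne : Real.sqrt 2 ≠ 0 := by positivity
  set a := q₁^2 + q₄^2 with ha
  set b := q₂^2 + q₃^2 with hb
  have ha0 : 0 ≤ a := by positivity
  have hb0 : 0 ≤ b := by positivity
  have hfa : frobSq M = a + b := by
    simp only [frobSq, Fin.sum_univ_two, ha, hb, hq₁, hq₂, hq₃, hq₄]
    field_simp
    linear_combination (M 0 0 ^ 2 + M 0 1 ^ 2 + M 1 0 ^ 2 + M 1 1 ^ 2) * s2
  have hdet : 4 * (M.det)^2 = (a - b)^2 := by
    rw [Matrix.det_fin_two]
    simp only [ha, hb, hq₁, hq₂, hq₃, hq₄]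
    field_simp
    linear_combination (-(M 0 0 * M 1 1 * M 0 1 * M 1 0 * 8) + M 0 0 ^ 2 * M 1 1 ^ 2 * 4 + M 0 1 ^ 2 * M 1 0 ^ 2 * 4) * (Real.sqrt 2 ^ 2 + 2) * s2
  have hsq : (frobSq M)^2 - 4 * (M.det)^2 = (2 * Real.sqrt a * Real.sqrt b)^2 := by
    rw [hfa, hdet]
    rw [mul_pow, mul_pow, Real.sq_sqrt ha0, Real.sq_sqrt hb0]
    ring
  rw [gFun, hsq, hfa, Real.sqrt_sq (by positivity)]
  have := Real.sq_sqrt ha0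
  have := Real.sq_sqrt hb0
  nlinarith [this]
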